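/- Assume the Bernoulli convolution ν_β is absolutely continuous with density h_β. Let X={(x,y)∈ℝ²: x∈I_β, 0≤y≤h_β(x)}, X₀={(x,y)∈X: 0≤y≤(β/2)h_β(βx)}, X₁ the closure of X∖X₀, and define φ:X→X by φ(x,y)=(βx, 2y/β) for (x,y)∈X₀ and φ(x,y)=(βx−1, 2y/β−h_β(βx)) for (x,y)∈X₁. Then φ preserves two-dimensional Lebesgue measure λ² restricted to X: λ²(φ⁻¹(A))=λ²(A) for every Borel set A⊆X. -/

import Mathlib

open MeasureTheory Filter Topology
open scoped ENNReal Classical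

noncomputable section

/-- The symbolic space `{0,1}^ℕ`. -/
abbrev Sig : Type := ℕ → Bool

/-- The metric `d(a,b) = 2^{-sup{n : a₁⋯a_n = b₁⋯b_n}}` on `Sig`. -/
noncomputable instance : MetricSpace Sig := PiNat.metricSpace

instance (priority := 2000) : MeasurableSpace Sig := borel Sig

instance : BorelSpace Sig := ⟨rfl⟩

/-- The cylinder set `[a₁⋯a_n]` determined by a word `w = a₁⋯a_n`. -/
def cyl (w : List Bool) : Set Sig := {b | ∀ i : Fin w.length, b i.1 = w.get i}

/-- `π_β(a) = Σ_{i=1}^∞ a_i β^{-i}`. -/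
def piBeta (β : ℝ) (a : Sig) : ℝ := ∑' i : ℕ, (if a i then (1 : ℝ) else 0) * (β ^ (i + 1))⁻¹

/-- `I_β = [0, 1/(β-1)]`. -/
def Ibeta (β : ℝ) : Set ℝ := Set.Icc 0 (β - 1)⁻¹

/-- The set `E_β(x) = π_β⁻¹(x)` of β-expansions of `x`. -/
def Ebeta (β : ℝ) (x : ℝ) : Set Sig := piBeta β ⁻¹' {x}

/-- `T_i(x) = βx - i` for `i = 0,1`. -/
def Tmap (β : ℝ) (b : Bool) (x : ℝ) : ℝ := β * x - (if b then 1 else 0)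

/-- `T_{a₁⋯a_n} = T_{a_n} ∘ ⋯ ∘ T_{a₁}`. -/
def Tword (β : ℝ) (w : List Bool) (x : ℝ) : ℝ := w.foldl (fun y b => Tmap β b y) x

/-- `s_β = log(2/β)/log 2`. -/
def sBeta (β : ℝ) : ℝ := Real.log (2 / β) / Real.log 2

/-- `m` is the uniform `(1/2,1/2)` Bernoulli measure: every cylinder of depth `n`
has measure `2^{-n}`. -/
def bernoulliCylProp (m : Measure Sig) : Prop :=
  ∀ w : List Bool, m (cyl w) = (2 : ℝ≥0∞)⁻¹ ^ w.length

/-- `X = {(x,y) : x ∈ I_β, 0 ≤ y ≤ h_β(x)}`. -/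
def Xspace (β : ℝ) (h : ℝ → ℝ) : Set (ℝ × ℝ) :=
  {p | p.1 ∈ Ibeta β ∧ 0 ≤ p.2 ∧ p.2 ≤ h p.1}

/-- `X₀ = {(x,y) ∈ X : 0 ≤ y ≤ (β/2) h_β(βx)}`. -/
def X0 (β : ℝ) (h : ℝ → ℝ) : Set (ℝ × ℝ) :=
  {p | p ∈ Xspace β h ∧ p.2 ≤ (β / 2) * h (β * p.1)}

/-- `X₁` is the closure of `X \ X₀`. -/
def X1 (β : ℝ) (h : ℝ → ℝ) : Set (ℝ × ℝ) := closure (Xspace β h \ X0 β h)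

/-- The map `φ : X → X`, `φ(x,y) = (βx, 2y/β)` on `X₀` and
`φ(x,y) = (βx-1, 2y/β - h_β(βx))` on `X₁`. -/
def phiMap (β : ℝ) (h : ℝ → ℝ) (p : ℝ × ℝ) : ℝ × ℝ :=
  if p ∈ X0 β h then (β * p.1, 2 * p.2 / β)
  else (β * p.1 - 1, 2 * p.2 / β - h (β * p.1))



section AuxBC


theorem sig_meas_eq_pi : (inferInstance : MeasurableSpace Sig) = MeasurableSpace.pi :=
  ((Pi.borelSpace (X := fun _ : ℕ => Bool)).measurable_eq).symm

theorem measurable_eval_sig (i : ℕ) : Measurable (fun a : Sig => a i) :=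
  (continuous_apply (A := fun _ : ℕ => Bool) i).measurable

theorem cyl_nil : cyl [] = Set.univ := by
  ext b; simp [cyl]

theorem measurableSet_cyl (w : List Bool) : MeasurableSet (cyl w) := by
  have : cyl w = ⋂ i : Fin w.length, (fun a : Sig => a i.1) ⁻¹' {w.get i} := by
    ext b; simp [cyl]
  rw [this]
  exact MeasurableSet.iInter fun i => (measurable_eval_sig i.1) (MeasurableSet.singleton _)

theorem cyl_eq_cylinder (x : Sig) (n : ℕ) :
    cyl (List.ofFn fun i : Fin n => x i) = PiNat.cylinder x n := by
  ext b
  simp only [cyl, Set.mem_setOf_eq, PiNat.mem_cylinder_iff, List.length_ofFn]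
  constructor
  · intro H i hi
    have := H ⟨i, by simpa using hi⟩
    simpa using this
  · intro H i
    have hi : (i.1 : ℕ) < n := by simpa using i.2
    simpa using H i.1 hi

def cylSets : Set (Set Sig) := {s | ∃ w : List Bool, s = cyl w}

theorem sig_generateFrom :
    (inferInstance : MeasurableSpace Sig) = MeasurableSpace.generateFrom cylSets := by
  refine le_antisymm ?_ (MeasurableSpace.generateFrom_le ?_)
  · rw [show (inferInstance : MeasurableSpace Sig) = borel Sig from rfl, borel]
    refine MeasurableSpace.generateFrom_le ?_
    intro u hu
    have : u = ⋃ (w : List Bool) (_ : cyl w ⊆ u), cyl w := by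
      apply Set.Subset.antisymm
      · intro x hx
        obtain ⟨v, ⟨y, n, rfl⟩, hxv, hvu⟩ :=
          (PiNat.isTopologicalBasis_cylinders (fun _ : ℕ => Bool)).exists_subset_of_mem_open hx hu
        have hxy : PiNat.cylinder x n = PiNat.cylinder y n := PiNat.mem_cylinder_iff_eq.1 hxv
        refine Set.mem_iUnion.2 ⟨List.ofFn fun i : Fin n => x i, Set.mem_iUnion.2 ⟨?_, ?_⟩⟩
        · rw [cyl_eq_cylinder, hxy]; exact hvu
        · rw [cyl_eq_cylinder]; exact PiNat.self_mem_cylinder x n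
      · intro x hx
        obtain ⟨w, hw⟩ := Set.mem_iUnion.1 hx
        obtain ⟨hsub, hxw⟩ := Set.mem_iUnion.1 hw
        exact hsub hxw
    rw [this]
    exact MeasurableSet.iUnion fun w => MeasurableSet.iUnion fun hw =>
      MeasurableSpace.measurableSet_generateFrom ⟨w, rfl⟩
  · rintro s ⟨w, rfl⟩
    exact measurableSet_cyl w

theorem isPiSystem_cylSets : IsPiSystem cylSets := by
  rintro s ⟨w, rfl⟩ t ⟨w', rfl⟩ hne
  -- wlog w.length ≤ w'.length
  have key : ∀ w w' : List Bool, w.length ≤ w'.length → (cyl w ∩ cyl w').Nonempty →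
      cyl w ∩ cyl w' = cyl w' := by
    intro w w' hlen ⟨b, hb1, hb2⟩
    have hsub : cyl w' ⊆ cyl w := by
      intro b' hb'
      intro i
      have h1 : b i.1 = w.get i := hb1 i
      have h2 : b i.1 = w'.get ⟨i.1, lt_of_lt_of_le i.2 hlen⟩ := hb2 ⟨i.1, lt_of_lt_of_le i.2 hlen⟩
      have h3 : b' i.1 = w'.get ⟨i.1, lt_of_lt_of_le i.2 hlen⟩ := hb' ⟨i.1, lt_of_lt_of_le i.2 hlen⟩
      rw [h3, ← h2, h1]
    rw [Set.inter_eq_right.2 hsub]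
  rcases le_total w.length w'.length with hle | hle
  · rw [key w w' hle hne]; exact ⟨w', rfl⟩
  · rw [Set.inter_comm] at hne ⊢
    rw [key w' w hle hne]; exact ⟨w, rfl⟩

/-- prepend a bit -/
def consB (b : Bool) (a : Sig) : Sig := fun n => Nat.casesOn n b (fun k => a k)

theorem measurable_consB (b : Bool) : Measurable (consB b) := by
  have : Continuous (consB b) := by
    apply continuous_pi
    intro n
    cases n with
    | zero => exact continuous_const
    | succ k => exact continuous_apply k
  exact this.measurable

theorem consB_pre_nil (b : Bool) : consB b ⁻¹' cyl [] = Set.univ := by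
  rw [cyl_nil]; rfl

theorem consB_pre_cons (b c : Bool) (w : List Bool) :
    consB b ⁻¹' cyl (c :: w) = if b = c then cyl w else ∅ := by
  ext a
  simp only [Set.mem_preimage, cyl, Set.mem_setOf_eq, List.length_cons]
  rw [Fin.forall_fin_succ]
  by_cases hbc : b = c
  · simp [hbc, consB, cyl]
  · simp [hbc, consB]

theorem m_self_similar (m : Measure Sig) (hm : bernoulliCylProp m) :
    m = (2:ℝ≥0∞)⁻¹ • Measure.map (consB false) m + (2:ℝ≥0∞)⁻¹ • Measure.map (consB true) m := by
  haveI hfin : IsFiniteMeasure m := by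
    constructor
    rw [← cyl_nil, hm []]
    simp
  refine ext_of_generate_finite cylSets sig_generateFrom isPiSystem_cylSets ?_ ?_
  · rintro s ⟨w, rfl⟩
    rw [Measure.add_apply, Measure.smul_apply, Measure.smul_apply,
      Measure.map_apply (measurable_consB false) (measurableSet_cyl w),
      Measure.map_apply (measurable_consB true) (measurableSet_cyl w), hm w]
    cases w with
    | nil =>
      rw [consB_pre_nil, consB_pre_nil, ← cyl_nil, hm []]
      simp only [List.length_nil, pow_zero, smul_eq_mul, mul_one]
      exact ENNReal.inv_two_add_inv_two.symm
    | cons c w' =>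
      rw [consB_pre_cons, consB_pre_cons]
      cases c with
      | false => rw [if_pos rfl, if_neg (by simp), hm w']; simp [pow_succ, mul_comm]
      | true => rw [if_neg (by simp), if_pos rfl, hm w']; simp [pow_succ, mul_comm]
  · have hu : m Set.univ = 1 := by rw [← cyl_nil, hm []]; simp
    rw [Measure.add_apply, Measure.smul_apply, Measure.smul_apply,
      Measure.map_apply (measurable_consB false) MeasurableSet.univ,
      Measure.map_apply (measurable_consB true) MeasurableSet.univ]
    simp only [Set.preimage_univ, hu, smul_eq_mul, mul_one]
    exact ENNReal.inv_two_add_inv_two.symm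


theorem summable_term {β : ℝ} (hβ : 1 < β) (a : Sig) :
    Summable (fun i : ℕ => (if a i then (1 : ℝ) else 0) * (β ^ (i + 1))⁻¹) := by
  have hb0 : 0 < β := lt_trans one_pos hβ
  have hgeo : Summable (fun i : ℕ => (β⁻¹) ^ (i + 1)) := by
    have : Summable (fun i : ℕ => (β⁻¹) ^ i) :=
      summable_geometric_of_lt_one (inv_nonneg.2 hb0.le) (inv_lt_one_of_one_lt₀ hβ)
    simpa [pow_succ, mul_comm] using this.mul_left β⁻¹
  apply Summable.of_nonneg_of_le _ _ hgeo
  · intro i; positivity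
  · intro i
    rw [← inv_pow]
    by_cases h : a i <;> simp [h, le_refl]
    · positivity

theorem measurable_piBeta {β : ℝ} (hβ : 1 < β) : Measurable (piBeta β) := by
  apply measurable_of_tendsto_metrizable
    (f := fun n (a : Sig) => ∑ i ∈ Finset.range n, (if a i then (1 : ℝ) else 0) * (β ^ (i + 1))⁻¹)
  · intro n
    apply Finset.measurable_sum
    intro i _
    have h1 : Measurable (fun v : Bool => (if v then (1:ℝ) else 0) * (β ^ (i + 1))⁻¹) :=
      measurable_of_countable _
    exact h1.comp (measurable_eval_sig i)
  · rw [tendsto_pi_nhds]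
    intro a
    exact ((summable_term hβ a).hasSum).tendsto_sum_nat

theorem piBeta_consB {β : ℝ} (hβ : 1 < β) (b : Bool) (a : Sig) :
    piBeta β (consB b a) = ((if b then (1:ℝ) else 0) + piBeta β a) / β := by
  have hb0 : (0:ℝ) < β := lt_trans one_pos hβ
  have hsum := summable_term hβ (consB b a)
  rw [piBeta, hsum.tsum_eq_zero_add]
  have h0 : (if consB b a 0 then (1:ℝ) else 0) * (β ^ (0 + 1))⁻¹ = (if b then (1:ℝ) else 0) / β := by
    simp [consB, pow_one, div_eq_mul_inv]
    cases b <;> simp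
  have hshift : ∀ i : ℕ, (if consB b a (i + 1) then (1:ℝ) else 0) * (β ^ (i + 1 + 1))⁻¹
      = β⁻¹ * ((if a i then (1:ℝ) else 0) * (β ^ (i + 1))⁻¹) := by
    intro i
    have : (β ^ (i + 1 + 1))⁻¹ = β⁻¹ * (β ^ (i + 1))⁻¹ := by
      rw [pow_succ, mul_inv, mul_comm]
    rw [this, consB]
    ring_nf
  rw [h0]
  simp_rw [hshift]
  rw [tsum_mul_left]
  rw [piBeta]
  have hne : β ≠ 0 := hb0.ne'
  cases b <;> field_simp <;> ring


theorem map_affine_volume {a : ℝ} (ha : 0 < a) (c : ℝ) :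
    Measure.map (fun x : ℝ => a * x + c) volume = ENNReal.ofReal a⁻¹ • volume := by
  have h1 : (fun x : ℝ => a * x + c) = (fun x : ℝ => x + c) ∘ (fun x : ℝ => a * x) := rfl
  rw [h1, ← Measure.map_map (measurable_add_const c) (measurable_const_mul a)]
  rw [show (fun x : ℝ => a * x) = (a * ·) from rfl, Real.map_volume_mul_left ha.ne']
  rw [Measure.map_smul]
  rw [map_add_right_eq_self volume c, abs_of_pos (inv_pos.2 ha)]

theorem vol_eq_map_affine {a : ℝ} (ha : 0 < a) (c : ℝ) :
    (volume : Measure ℝ) = Measure.map (fun x : ℝ => a * x + c) (ENNReal.ofReal a • volume) := by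
  rw [Measure.map_smul, map_affine_volume ha c, smul_smul, ← ENNReal.ofReal_mul ha.le,
    mul_inv_cancel₀ ha.ne', ENNReal.ofReal_one, one_smul]

/-- change of variables for withDensity under an affine map. -/
theorem map_affine_withDensity {a : ℝ} (ha : 0 < a) (c : ℝ) {f : ℝ → ℝ≥0∞}
    (hf : Measurable f) :
    Measure.map (fun x : ℝ => a⁻¹ * (x - c)) (volume.withDensity f)
      = volume.withDensity (fun x => ENNReal.ofReal a * f (a * x + c)) := by
  have hS : Measurable (fun x : ℝ => a⁻¹ * (x - c)) := by fun_prop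
  have hT : Measurable (fun x : ℝ => a * x + c) := by fun_prop
  ext E hE
  rw [Measure.map_apply hS hE, withDensity_apply _ (hS hE), withDensity_apply _ hE]
  set S := fun x : ℝ => a⁻¹ * (x - c) with hSdef
  set T := fun x : ℝ => a * x + c with hTdef
  have hcomp : ∀ x, S (T x) = x := by
    intro x; simp only [hSdef, hTdef]; field_simp; ring
  have key : ∀ x : ℝ, (S ⁻¹' E).indicator f (T x) = E.indicator (fun y => f (T y)) x := by
    intro x
    by_cases hx : x ∈ E
    · rw [Set.indicator_of_mem hx, Set.indicator_of_mem]
      simp [Set.mem_preimage, hcomp x, hx]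
    · rw [Set.indicator_of_notMem hx, Set.indicator_of_notMem]
      simp [Set.mem_preimage, hcomp x, hx]
  calc ∫⁻ x in S ⁻¹' E, f x ∂volume
      = ∫⁻ x, (S ⁻¹' E).indicator f x ∂volume := (lintegral_indicator (hS hE) f).symm
    _ = ∫⁻ x, (S ⁻¹' E).indicator f x ∂(Measure.map T (ENNReal.ofReal a • volume)) := by
        rw [← vol_eq_map_affine ha c]
    _ = ∫⁻ x, (S ⁻¹' E).indicator f (T x) ∂(ENNReal.ofReal a • volume) := by
        rw [lintegral_map (hf.indicator (hS hE)) hT]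
    _ = ∫⁻ x, E.indicator (fun y => f (T y)) x ∂(ENNReal.ofReal a • volume) := by
        simp_rw [key]
    _ = ENNReal.ofReal a * ∫⁻ x, E.indicator (fun y => f (T y)) x ∂volume := by
        rw [lintegral_smul_measure, smul_eq_mul]
    _ = ENNReal.ofReal a * ∫⁻ x in E, f (T x) ∂volume := by
        rw [lintegral_indicator hE]
    _ = ∫⁻ x in E, ENNReal.ofReal a * f (T x) ∂volume := by
        exact (lintegral_const_mul (ENNReal.ofReal a) (hf.comp hT)).symm

theorem func_eq {β : ℝ} (hβ : β ∈ Set.Ioo (1:ℝ) 2)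
    (m : Measure Sig) (hm : bernoulliCylProp m)
    (h : ℝ → ℝ) (hmeas : Measurable h) (hnonneg : ∀ x, 0 ≤ h x)
    (hdens : Measure.map (piBeta β) m
      = volume.withDensity fun x => ENNReal.ofReal (h x)) :
    ∀ᵐ x : ℝ, h x = β / 2 * h (β * x) + β / 2 * h (β * x - 1) := by
  obtain ⟨hb1, hb2⟩ := hβ
  have hb0 : (0:ℝ) < β := lt_trans one_pos hb1
  set f : ℝ → ℝ≥0∞ := fun x => ENNReal.ofReal (h x) with hfdef
  have hfm : Measurable f := hmeas.ennreal_ofReal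
  set S0 : ℝ → ℝ := fun x => β⁻¹ * (x - 0) with hS0
  set S1 : ℝ → ℝ := fun x => β⁻¹ * (x - (-1)) with hS1
  have hS0m : Measurable S0 := by fun_prop
  have hS1m : Measurable S1 := by fun_prop
  have hc0 : piBeta β ∘ consB false = S0 ∘ piBeta β := by
    funext a
    have hpc := piBeta_consB hb1 false a
    simp only [Bool.false_eq_true, if_false] at hpc
    simp only [Function.comp_apply, hpc, hS0]
    ring
  have hc1 : piBeta β ∘ consB true = S1 ∘ piBeta β := by
    funext a
    have hpc := piBeta_consB hb1 true a
    simp only [if_true] at hpc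
    simp only [Function.comp_apply, hpc, hS1]
    ring
  -- self-similarity of ν
  have hνss : Measure.map (piBeta β) m
      = (2:ℝ≥0∞)⁻¹ • Measure.map S0 (Measure.map (piBeta β) m)
        + (2:ℝ≥0∞)⁻¹ • Measure.map S1 (Measure.map (piBeta β) m) := by
    conv_lhs => rw [m_self_similar m hm]
    rw [Measure.map_add _ _ (measurable_piBeta hb1), Measure.map_smul, Measure.map_smul,
      Measure.map_map (measurable_piBeta hb1) (measurable_consB false),
      Measure.map_map (measurable_piBeta hb1) (measurable_consB true), hc0, hc1,
      ← Measure.map_map hS0m (measurable_piBeta hb1),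
      ← Measure.map_map hS1m (measurable_piBeta hb1)]
  rw [hdens] at hνss
  have hmap0 : Measure.map S0 (volume.withDensity f)
      = volume.withDensity (fun x => ENNReal.ofReal β * f (β * x + 0)) :=
    map_affine_withDensity hb0 0 hfm
  have hmap1 : Measure.map S1 (volume.withDensity f)
      = volume.withDensity (fun x => ENNReal.ofReal β * f (β * x + (-1))) :=
    map_affine_withDensity hb0 (-1) hfm
  rw [hmap0, hmap1] at hνss
  have hg0m : Measurable (fun x : ℝ => ENNReal.ofReal β * f (β * x + 0)) := by fun_prop
  have hg1m : Measurable (fun x : ℝ => ENNReal.ofReal β * f (β * x + (-1))) := by fun_prop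
  have hsm0 : (2:ℝ≥0∞)⁻¹ • volume.withDensity (fun x => ENNReal.ofReal β * f (β * x + 0))
      = volume.withDensity (fun x => (2:ℝ≥0∞)⁻¹ * (ENNReal.ofReal β * f (β * x + 0))) :=
    (withDensity_smul _ hg0m).symm
  have hsm1 : (2:ℝ≥0∞)⁻¹ • volume.withDensity (fun x => ENNReal.ofReal β * f (β * x + (-1)))
      = volume.withDensity (fun x => (2:ℝ≥0∞)⁻¹ * (ENNReal.ofReal β * f (β * x + (-1)))) :=
    (withDensity_smul _ hg1m).symm
  rw [hsm0, hsm1, ← withDensity_add_left (by fun_prop)] at hνss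
  have hae : f =ᵐ[volume] (fun x => (2:ℝ≥0∞)⁻¹ * (ENNReal.ofReal β * f (β * x + 0))
      + (2:ℝ≥0∞)⁻¹ * (ENNReal.ofReal β * f (β * x + (-1)))) := by
    refine (withDensity_eq_iff_of_sigmaFinite hfm.aemeasurable (by fun_prop)).1 ?_
    exact hνss
  filter_upwards [hae] with x hx
  have h2 : ((2:ℝ≥0∞))⁻¹ = ENNReal.ofReal (2:ℝ)⁻¹ := by
    rw [ENNReal.ofReal_inv_of_pos two_pos, ENNReal.ofReal_ofNat]
  rw [hfdef] at hx
  simp only [h2, ← ENNReal.ofReal_mul (by positivity : (0:ℝ) ≤ (2:ℝ)⁻¹),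
    ← ENNReal.ofReal_mul hb0.le] at hx
  have hn1 : (0:ℝ) ≤ 2⁻¹ * (β * h (β * x + 0)) :=
    mul_nonneg (by norm_num) (mul_nonneg hb0.le (hnonneg _))
  have hn2 : (0:ℝ) ≤ 2⁻¹ * (β * h (β * x + (-1))) :=
    mul_nonneg (by norm_num) (mul_nonneg hb0.le (hnonneg _))
  rw [← ENNReal.ofReal_add hn1 hn2,
    ENNReal.ofReal_eq_ofReal_iff (hnonneg x) (add_nonneg hn1 hn2)] at hx
  rw [hx]; ring_nf

theorem smul_prod_smul (c d : ℝ≥0∞) :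
    ((c • (volume : Measure ℝ)).prod (d • (volume : Measure ℝ)))
      = (c * d) • ((volume : Measure ℝ).prod volume) := by
  ext s hs
  rw [Measure.prod_apply hs, Measure.smul_apply, Measure.prod_apply hs, lintegral_smul_measure]
  simp only [Measure.smul_apply, smul_eq_mul]
  rw [lintegral_const_mul d (measurable_measure_prodMk_left hs), ← mul_assoc]

theorem graph_null {F : ℝ → ℝ} (hF : Measurable F) :
    volume {p : ℝ × ℝ | p.2 = F p.1} = 0 := by
  have hmeas : MeasurableSet {p : ℝ × ℝ | p.2 = F p.1} :=
    measurableSet_eq_fun measurable_snd (hF.comp measurable_fst)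
  rw [Measure.volume_eq_prod, Measure.prod_apply hmeas]
  have : ∀ x : ℝ, (Prod.mk x ⁻¹' {p : ℝ × ℝ | p.2 = F p.1}) = {F x} := by
    intro x; ext y; simp [Set.mem_preimage]
  simp [this]

theorem prod_null_left {N : Set ℝ} (hN : volume N = 0) :
    volume (N ×ˢ (Set.univ : Set ℝ)) = 0 := by
  rw [Measure.volume_eq_prod, Measure.prod_prod, hN, zero_mul]

theorem map_g0 {β : ℝ} (hb1 : 1 < β) (hb2 : β < 2) :
    Measure.map (fun p : ℝ × ℝ => (β * p.1, 2 * p.2 / β)) (volume : Measure (ℝ × ℝ))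
      = ENNReal.ofReal 2⁻¹ • (volume : Measure (ℝ × ℝ)) := by
  have hb0 : (0:ℝ) < β := lt_trans one_pos hb1
  have hf : MeasurePreserving (fun x : ℝ => β * x) volume (ENNReal.ofReal β⁻¹ • volume) := by
    refine ⟨by fun_prop, ?_⟩
    rw [show (fun x : ℝ => β * x) = fun x : ℝ => β * x + 0 by funext x; ring]
    exact map_affine_volume hb0 0
  have hg : ∀ᵐ x : ℝ ∂volume,
      Measure.map ((fun (_ : ℝ) (y : ℝ) => 2 * y / β) x) volume
        = ENNReal.ofReal (β / 2) • volume := by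
    refine Filter.Eventually.of_forall fun x => ?_
    rw [show (fun y : ℝ => 2 * y / β) = fun y : ℝ => (2 / β) * y + 0 by funext y; ring]
    rw [map_affine_volume (by positivity) 0, inv_div]
  have hsp := MeasurePreserving.skew_product (f := fun x : ℝ => β * x)
    (g := fun (_ : ℝ) (y : ℝ) => 2 * y / β) hf (by fun_prop) hg
  have := hsp.map_eq
  rw [Measure.volume_eq_prod, this, smul_prod_smul, ← ENNReal.ofReal_mul (by positivity),
    show β⁻¹ * (β / 2) = 2⁻¹ by field_simp, ← Measure.volume_eq_prod]

theorem map_g1 {β : ℝ} (hb1 : 1 < β) (hb2 : β < 2) (h : ℝ → ℝ) (hmeas : Measurable h) :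
    Measure.map (fun p : ℝ × ℝ => (β * p.1 - 1, 2 * p.2 / β - h (β * p.1)))
        (volume : Measure (ℝ × ℝ))
      = ENNReal.ofReal 2⁻¹ • (volume : Measure (ℝ × ℝ)) := by
  have hb0 : (0:ℝ) < β := lt_trans one_pos hb1
  have hf : MeasurePreserving (fun x : ℝ => β * x - 1) volume (ENNReal.ofReal β⁻¹ • volume) := by
    refine ⟨by fun_prop, ?_⟩
    rw [show (fun x : ℝ => β * x - 1) = fun x : ℝ => β * x + (-1) by funext x; ring]
    exact map_affine_volume hb0 (-1)
  have hg : ∀ᵐ x : ℝ ∂volume,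
      Measure.map ((fun (x : ℝ) (y : ℝ) => 2 * y / β - h (β * x)) x) volume
        = ENNReal.ofReal (β / 2) • volume := by
    refine Filter.Eventually.of_forall fun x => ?_
    show Measure.map (fun y : ℝ => 2 * y / β - h (β * x)) volume = ENNReal.ofReal (β / 2) • volume
    rw [show (fun y : ℝ => 2 * y / β - h (β * x))
        = fun y : ℝ => (2 / β) * y + (- h (β * x)) by funext y; ring]
    rw [map_affine_volume (by positivity) _, inv_div]
  have hgm : Measurable (Function.uncurry fun (x : ℝ) (y : ℝ) => 2 * y / β - h (β * x)) := by
    apply Measurable.sub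
    · exact (measurable_snd.const_mul 2).div_const β
    · exact hmeas.comp (measurable_fst.const_mul β)
  have hsp := MeasurePreserving.skew_product (f := fun x : ℝ => β * x - 1)
    (g := fun (x : ℝ) (y : ℝ) => 2 * y / β - h (β * x)) hf hgm hg
  have := hsp.map_eq
  rw [Measure.volume_eq_prod, this, smul_prod_smul, ← ENNReal.ofReal_mul (by positivity),
    show β⁻¹ * (β / 2) = 2⁻¹ by field_simp, ← Measure.volume_eq_prod]

end AuxBC

/-- If the Bernoulli convolution `ν_β` is absolutely continuous with
density `h_β`, then `φ` preserves two-dimensional Lebesgue measure restricted to `X`: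
`λ²(φ⁻¹(A)) = λ²(A)` for every Borel set `A ⊆ X`. -/
theorem stmt0 (β : ℝ) (hβ : β ∈ Set.Ioo (1 : ℝ) 2)
    (m : Measure Sig) (hm : bernoulliCylProp m)
    (h : ℝ → ℝ) (hmeas : Measurable h) (hnonneg : ∀ x, 0 ≤ h x)
    (hsupp : ∀ x ∉ Ibeta β, h x = 0)
    (hdens : Measure.map (piBeta β) m
      = volume.withDensity fun x => ENNReal.ofReal (h x)) :
    ∀ A : Set (ℝ × ℝ), MeasurableSet A → A ⊆ Xspace β h →
      volume (Xspace β h ∩ phiMap β h ⁻¹' A) = volume A := by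
  intro A hA hAX
  obtain ⟨hb1, hb2⟩ := hβ
  have hb0 : (0:ℝ) < β := lt_trans one_pos hb1
  have hbm1 : (0:ℝ) < β - 1 := by linarith
  set g0 : ℝ × ℝ → ℝ × ℝ := fun p => (β * p.1, 2 * p.2 / β) with hg0def
  set g1 : ℝ × ℝ → ℝ × ℝ := fun p => (β * p.1 - 1, 2 * p.2 / β - h (β * p.1)) with hg1def
  have hg0m : Measurable g0 := by fun_prop
  have hg1m : Measurable g1 := by
    apply Measurable.prod
    · fun_prop
    · exact ((measurable_snd.const_mul 2).div_const β).sub (hmeas.comp (measurable_fst.const_mul β))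
  have hXmeas : MeasurableSet (Xspace β h) := by
    have h1 : MeasurableSet {p : ℝ × ℝ | p.1 ∈ Ibeta β} := measurable_fst measurableSet_Icc
    have h2 : MeasurableSet {p : ℝ × ℝ | 0 ≤ p.2} := measurableSet_le measurable_const measurable_snd
    have h3 : MeasurableSet {p : ℝ × ℝ | p.2 ≤ h p.1} :=
      measurableSet_le measurable_snd (hmeas.comp measurable_fst)
    have : Xspace β h = {p : ℝ × ℝ | p.1 ∈ Ibeta β} ∩ ({p | 0 ≤ p.2} ∩ {p | p.2 ≤ h p.1}) := by
      ext p; simp only [Xspace, Set.mem_setOf_eq, Set.mem_inter_iff]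
    rw [this]; exact h1.inter (h2.inter h3)
  have hX0meas : MeasurableSet (X0 β h) := by
    have h4 : MeasurableSet {p : ℝ × ℝ | p.2 ≤ β / 2 * h (β * p.1)} :=
      measurableSet_le measurable_snd ((hmeas.comp (measurable_fst.const_mul β)).const_mul (β/2))
    have : X0 β h = Xspace β h ∩ {p : ℝ × ℝ | p.2 ≤ β / 2 * h (β * p.1)} := by
      ext p; simp [X0, Set.mem_inter_iff]
    rw [this]; exact hXmeas.inter h4
  -- split
  have hsplit : Xspace β h ∩ phiMap β h ⁻¹' A
      = ((Xspace β h ∩ X0 β h) ∩ g0 ⁻¹' A) ∪ ((Xspace β h \ X0 β h) ∩ g1 ⁻¹' A) := by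
    ext p
    by_cases hp : p ∈ X0 β h <;>
      simp only [Set.mem_inter_iff, Set.mem_union, Set.mem_preimage, Set.mem_diff, phiMap,
        hp, if_true, if_false, hg0def, hg1def] <;> tauto
  -- the null sets
  have hfe := func_eq ⟨hb1, hb2⟩ m hm h hmeas hnonneg hdens
  set NE : Set ℝ := {x | ¬ (h x = β / 2 * h (β * x) + β / 2 * h (β * x - 1))} with hNEdef
  have hNE : volume NE = 0 := hfe
  have hNEprod : volume (NE ×ˢ (Set.univ : Set ℝ)) = 0 := prod_null_left hNE
  have hG : volume {p : ℝ × ℝ | p.2 = β / 2 * h (β * p.1)} = 0 :=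
    graph_null ((hmeas.comp (measurable_const_mul β)).const_mul (β/2))
  -- inclusion 0
  have hinc0 : g0 ⁻¹' A \ (Xspace β h ∩ X0 β h) ⊆ NE ×ˢ (Set.univ : Set ℝ) := by
    rintro p ⟨hpA, hpn⟩
    refine ⟨?_, trivial⟩
    by_contra hne
    have heq : h p.1 = β / 2 * h (β * p.1) + β / 2 * h (β * p.1 - 1) := not_not.1 hne
    apply hpn
    have hgX := hAX hpA
    obtain ⟨⟨hx0, hx1⟩, hy0, hy1⟩ := hgX
    simp only [hg0def] at hx0 hx1 hy0 hy1
    have hpx0 : 0 ≤ p.1 := by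
      by_contra hc
      push_neg at hc
      have : β * p.1 < 0 := mul_neg_of_pos_of_neg hb0 hc
      linarith
    have hpx1 : p.1 ≤ (β - 1)⁻¹ := by
      have h1 : p.1 ≤ β * p.1 := by nlinarith
      linarith
    have hy0' : 0 ≤ 2 * p.2 := by
      rw [le_div_iff₀ hb0] at hy0; linarith
    have hy1' : 2 * p.2 ≤ h (β * p.1) * β := by
      rw [div_le_iff₀ hb0] at hy1; linarith
    have hyle : p.2 ≤ β / 2 * h (β * p.1) := by linarith
    have hyh : p.2 ≤ h p.1 := by
      have := hnonneg (β * p.1 - 1)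
      rw [heq]; nlinarith
    have hXs : p ∈ Xspace β h := ⟨⟨hpx0, hpx1⟩, by linarith, hyh⟩
    exact ⟨hXs, hXs, hyle⟩
  -- inclusion 1
  have hinc1 : g1 ⁻¹' A \ (Xspace β h \ X0 β h)
      ⊆ (NE ×ˢ (Set.univ : Set ℝ)) ∪ {p : ℝ × ℝ | p.2 = β / 2 * h (β * p.1)} := by
    rintro p ⟨hpA, hpn⟩
    by_cases hxNE : p.1 ∈ NE
    · exact Or.inl ⟨hxNE, trivial⟩
    by_cases hyG : p.2 = β / 2 * h (β * p.1)
    · exact Or.inr hyG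
    exfalso
    have heq : h p.1 = β / 2 * h (β * p.1) + β / 2 * h (β * p.1 - 1) := not_not.1 hxNE
    apply hpn
    have hgX := hAX hpA
    obtain ⟨⟨hx0, hx1⟩, hy0, hy1⟩ := hgX
    simp only [hg1def] at hx0 hx1 hy0 hy1
    have hpx0 : 0 ≤ p.1 := by
      by_contra hc
      push_neg at hc
      have : β * p.1 < 0 := mul_neg_of_pos_of_neg hb0 hc
      linarith
    have hpx1 : p.1 ≤ (β - 1)⁻¹ := by
      have hkey : 1 + (β - 1)⁻¹ = β * (β - 1)⁻¹ := by field_simp; ring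
      have h2 : β * p.1 ≤ β * (β - 1)⁻¹ := by linarith
      exact le_of_mul_le_mul_left h2 hb0
    have hy0' : h (β * p.1) ≤ 2 * p.2 / β := by linarith
    rw [le_div_iff₀ hb0] at hy0'
    have hyge : β / 2 * h (β * p.1) ≤ p.2 := by linarith
    have hy1' : 2 * p.2 / β ≤ h (β * p.1) + h (β * p.1 - 1) := by linarith
    rw [div_le_iff₀ hb0] at hy1'
    have hyh : p.2 ≤ h p.1 := by rw [heq]; nlinarith
    have hy2 : 0 ≤ p.2 := le_trans (mul_nonneg (by linarith) (hnonneg _)) hyge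
    refine ⟨⟨⟨hpx0, hpx1⟩, hy2, hyh⟩, ?_⟩
    intro hmem
    have : p.2 ≤ β / 2 * h (β * p.1) := hmem.2
    have : p.2 = β / 2 * h (β * p.1) := le_antisymm this hyge
    exact hyG this
  -- measures of the two pieces
  have hpre0 : volume (g0 ⁻¹' A) = ENNReal.ofReal 2⁻¹ * volume A := by
    rw [← Measure.map_apply hg0m hA, map_g0 hb1 hb2, Measure.smul_apply, smul_eq_mul]
  have hpre1 : volume (g1 ⁻¹' A) = ENNReal.ofReal 2⁻¹ * volume A := by
    rw [← Measure.map_apply hg1m hA, map_g1 hb1 hb2 h hmeas, Measure.smul_apply, smul_eq_mul]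
  have hm0 : volume ((Xspace β h ∩ X0 β h) ∩ g0 ⁻¹' A) = volume (g0 ⁻¹' A) := by
    apply le_antisymm (measure_mono Set.inter_subset_right)
    calc volume (g0 ⁻¹' A)
        ≤ volume (((Xspace β h ∩ X0 β h) ∩ g0 ⁻¹' A) ∪ (g0 ⁻¹' A \ (Xspace β h ∩ X0 β h))) := by
          apply measure_mono
          intro p hp
          by_cases hmem : p ∈ Xspace β h ∩ X0 β h
          · exact Or.inl ⟨hmem, hp⟩
          · exact Or.inr ⟨hp, hmem⟩
      _ ≤ volume ((Xspace β h ∩ X0 β h) ∩ g0 ⁻¹' A) + volume (g0 ⁻¹' A \ (Xspace β h ∩ X0 β h)) :=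
          measure_union_le _ _
      _ = volume ((Xspace β h ∩ X0 β h) ∩ g0 ⁻¹' A) := by
          rw [measure_mono_null hinc0 hNEprod, add_zero]
  have hm1 : volume ((Xspace β h \ X0 β h) ∩ g1 ⁻¹' A) = volume (g1 ⁻¹' A) := by
    apply le_antisymm (measure_mono Set.inter_subset_right)
    have hnull : volume ((NE ×ˢ (Set.univ : Set ℝ)) ∪ {p : ℝ × ℝ | p.2 = β / 2 * h (β * p.1)}) = 0 :=
      measure_union_null hNEprod hG
    calc volume (g1 ⁻¹' A)
        ≤ volume (((Xspace β h \ X0 β h) ∩ g1 ⁻¹' A) ∪ (g1 ⁻¹' A \ (Xspace β h \ X0 β h))) := by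
          apply measure_mono
          intro p hp
          by_cases hmem : p ∈ Xspace β h \ X0 β h
          · exact Or.inl ⟨hmem, hp⟩
          · exact Or.inr ⟨hp, hmem⟩
      _ ≤ volume ((Xspace β h \ X0 β h) ∩ g1 ⁻¹' A) + volume (g1 ⁻¹' A \ (Xspace β h \ X0 β h)) :=
          measure_union_le _ _
      _ = volume ((Xspace β h \ X0 β h) ∩ g1 ⁻¹' A) := by
          rw [measure_mono_null hinc1 hnull, add_zero]
  -- combine
  rw [hsplit, measure_union ?hd ((hXmeas.diff hX0meas).inter (hg1m hA)), hm0, hm1, hpre0, hpre1,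
    ← add_mul, ← ENNReal.ofReal_add (by norm_num) (by norm_num)]
  · norm_num
  case hd =>
    rw [Set.disjoint_left]
    rintro p ⟨⟨_, hpX0⟩, _⟩ ⟨⟨_, hpnX0⟩, _⟩
    exact hpnX0 hpX0
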